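/- Let f be convex differentiable with L-Lipschitz gradient, and z_1,…,z_m ∈ ℝ^n with f_i = f(z_i), g_i = ∇f(z_i). Define φ_i(y,g) = f_i + ⟨g_i, y − z_i⟩ + (1/(2L))‖g − g_i‖² and p(y) = min_{g ∈ ℝ^n} max_{i} φ_i(y,g). Then p(y) ≤ f(y) for all y. -/

import Mathlib

open RealInnerProductSpace

section Aux

variable {E : Type*} [NormedAddCommGroup E] [InnerProductSpace ℝ E] [CompleteSpace E]

/-- Derivative of the 1-D restriction of a function with a gradient. -/
lemma aux_hasDerivAt {f : E → ℝ} {f' : E → E} (hgrad : ∀ x, HasGradientAt f (f' x) x)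
    (a v : E) (t : ℝ) :
    HasDerivAt (fun s : ℝ => f (a + s • v)) ⟪f' (a + t • v), v⟫ t := by
  have hline : HasDerivAt (fun s : ℝ => a + s • v) v t := by
    simpa using ((hasDerivAt_id t).smul_const v).const_add a
  have := (hgrad (a + t • v)).hasFDerivAt.comp_hasDerivAt t hline
  simpa [InnerProductSpace.toDual_apply_apply, Function.comp_def] using this

/-- First-order condition for convexity. -/
lemma aux_grad_ineq {f : E → ℝ} {f' : E → E} (hconv : ConvexOn ℝ Set.univ f)
    (hgrad : ∀ x, HasGradientAt f (f' x) x) (x w : E) :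
    f x + ⟪f' x, w - x⟫ ≤ f w := by
  set v := w - x with hv
  set g : ℝ → ℝ := fun s => f (x + s • v) with hg
  have hgconv : ConvexOn ℝ Set.univ g := by
    have := hconv.comp_affineMap (AffineMap.lineMap x w : ℝ →ᵃ[ℝ] E)
    have heq : (f ∘ (AffineMap.lineMap x w : ℝ →ᵃ[ℝ] E)) = g := by
      funext s
      simp [hg, AffineMap.lineMap_apply, hv]
      congr 1
      module
    rw [heq] at this
    simpa using this
  have hd : HasDerivAt g ⟪f' x, v⟫ 0 := by
    simpa using aux_hasDerivAt hgrad x v 0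
  have := hgconv.le_slope_of_hasDerivAt (Set.mem_univ (0:ℝ)) (Set.mem_univ (1:ℝ))
    one_pos hd
  rw [slope_def_field] at this
  have h01 : g 1 = f w := by simp [hg, hv]
  have h00 : g 0 = f x := by simp [hg]
  simp [h01, h00] at this
  linarith [this]

/-- Descent lemma for L-smooth functions. -/
lemma aux_descent {f : E → ℝ} {f' : E → E} (hgrad : ∀ x, HasGradientAt f (f' x) x)
    {L : ℝ} (hL : 0 < L) (hlip : ∀ x y, ‖f' x - f' y‖ ≤ L * ‖x - y‖) (a b : E) :
    f b ≤ f a + ⟪f' a, b - a⟫ + L / 2 * ‖b - a‖ ^ 2 := by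
  set v := b - a with hv
  set h : ℝ → ℝ := fun t => f (a + t • v) - ⟪f' a, v⟫ * t - L * ‖v‖ ^ 2 * t ^ 2 / 2 with hh
  have hderiv : ∀ t : ℝ, HasDerivAt h
      (⟪f' (a + t • v), v⟫ - ⟪f' a, v⟫ - L * ‖v‖ ^ 2 * t) t := by
    intro t
    have h1 := aux_hasDerivAt hgrad a v t
    have h2 : HasDerivAt (fun t : ℝ => ⟪f' a, v⟫ * t) ⟪f' a, v⟫ t := by
      simpa using (hasDerivAt_id t).const_mul ⟪f' a, v⟫
    have h3 : HasDerivAt (fun t : ℝ => L * ‖v‖ ^ 2 * t ^ 2 / 2) (L * ‖v‖ ^ 2 * t) t := by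
      have := (hasDerivAt_pow 2 t).const_mul (L * ‖v‖ ^ 2)
      have := this.div_const 2
      exact this.congr_deriv (by norm_num; ring)
    simpa [hh, Pi.sub_def] using (h1.sub h2).sub h3
  have hanti : AntitoneOn h (Set.Icc (0:ℝ) 1) := by
    apply antitoneOn_of_deriv_nonpos (convex_Icc 0 1)
    · exact fun t _ => ((hderiv t).continuousAt).continuousWithinAt
    · exact fun t _ => ((hderiv t).differentiableAt).differentiableWithinAt
    · intro t ht
      rw [interior_Icc] at ht
      rw [(hderiv t).deriv]
      have hinner : ⟪f' (a + t • v) - f' a, v⟫ ≤ L * t * ‖v‖ ^ 2 := by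
        calc ⟪f' (a + t • v) - f' a, v⟫ ≤ ‖f' (a + t • v) - f' a‖ * ‖v‖ :=
              real_inner_le_norm _ _
          _ ≤ L * ‖(a + t • v) - a‖ * ‖v‖ := by
              have := hlip (a + t • v) a
              nlinarith [norm_nonneg v]
          _ = L * t * ‖v‖ ^ 2 := by
              rw [add_sub_cancel_left, norm_smul]
              simp [abs_of_pos ht.1]
              ring
      rw [inner_sub_left] at hinner
      nlinarith
  have := hanti (Set.left_mem_Icc.mpr zero_le_one) (Set.right_mem_Icc.mpr zero_le_one)
    zero_le_one
  have h0 : h 0 = f a := by simp [hh]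
  have h1' : h 1 = f b - ⟪f' a, v⟫ - L * ‖v‖ ^ 2 / 2 := by
    simp [hh, hv]
  rw [h0, h1'] at this
  rw [hv] at *
  linarith

/-- Cocoercivity / interpolation inequality. -/
lemma aux_interp {f : E → ℝ} {f' : E → E} (hconv : ConvexOn ℝ Set.univ f)
    (hgrad : ∀ x, HasGradientAt f (f' x) x)
    {L : ℝ} (hL : 0 < L) (hlip : ∀ x y, ‖f' x - f' y‖ ≤ L * ‖x - y‖) (zi y : E) :
    f zi + ⟪f' zi, y - zi⟫ + 1 / (2 * L) * ‖f' y - f' zi‖ ^ 2 ≤ f y := by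
  set u := f' y - f' zi with hu
  set b := y - (1 / L) • u with hb
  -- gradient inequality: f zi + ⟪f' zi, b - zi⟫ ≤ f b
  have h1 := aux_grad_ineq hconv hgrad zi b
  -- descent: f b ≤ f y + ⟪f' y, b - y⟫ + L/2 ‖b - y‖²
  have h2 := aux_descent hgrad hL hlip y b
  have hby : b - y = -((1 / L) • u) := by simp [hb]
  have hnorm : ‖b - y‖ ^ 2 = (1 / L) ^ 2 * ‖u‖ ^ 2 := by
    rw [hby, norm_neg, norm_smul, Real.norm_eq_abs, abs_of_pos (by positivity : (0:ℝ) < 1 / L)]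
    ring
  have hinner2 : ⟪f' y, b - y⟫ = -(1 / L) * ⟪f' y, u⟫ := by
    rw [hby, inner_neg_right, real_inner_smul_right]
    ring
  have hbz : b - zi = (y - zi) + -((1 / L) • u) := by
    rw [hb]; abel
  have hinner1 : ⟪f' zi, b - zi⟫ = ⟪f' zi, y - zi⟫ - (1 / L) * ⟪f' zi, u⟫ := by
    rw [hbz, inner_add_right, inner_neg_right, real_inner_smul_right]
    ring
  have husq : ⟪f' y, u⟫ - ⟪f' zi, u⟫ = ‖u‖ ^ 2 := by
    rw [← inner_sub_left, ← hu, real_inner_self_eq_norm_sq]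
  rw [hinner1] at h1
  rw [hinner2, hnorm] at h2
  have hLne : L ≠ 0 := ne_of_gt hL
  -- combine
  have key : f zi + ⟪f' zi, y - zi⟫ + 1 / (2 * L) * ‖u‖ ^ 2 ≤ f y := by
    have e1 : L / 2 * ((1 / L) ^ 2 * ‖u‖ ^ 2) = 1 / (2 * L) * ‖u‖ ^ 2 := by
      field_simp
    have h4 : 1 / L * (⟪f' y, u⟫ - ⟪f' zi, u⟫ : ℝ) = 1 / L * ‖u‖ ^ 2 := by rw [husq]
    have e2 : 1 / L * ‖u‖ ^ 2 = 2 * (1 / (2 * L) * ‖u‖ ^ 2) := by field_simp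
    linarith [h1, h2, h4, e1, e2]
  exact key

end Aux

theorem stmt2 (n m : ℕ) (hm : 0 < m) (f : EuclideanSpace ℝ (Fin n) → ℝ)
    (f' : EuclideanSpace ℝ (Fin n) → EuclideanSpace ℝ (Fin n))
    (hconv : ConvexOn ℝ Set.univ f)
    (hgrad : ∀ x, HasGradientAt f (f' x) x)
    (L : ℝ) (hL : 0 < L)
    (hlip : ∀ x y, ‖f' x - f' y‖ ≤ L * ‖x - y‖)
    (z : Fin m → EuclideanSpace ℝ (Fin n))
    (y : EuclideanSpace ℝ (Fin n)) :
    (⨅ g : EuclideanSpace ℝ (Fin n), ⨆ i : Fin m,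
        (f (z i) + ⟪f' (z i), y - z i⟫ + (1/(2*L)) * ‖g - f' (z i)‖^2)) ≤ f y := by
  haveI : Nonempty (Fin m) := ⟨⟨0, hm⟩⟩
  have hbdd : BddBelow (Set.range fun g : EuclideanSpace ℝ (Fin n) => ⨆ i : Fin m,
      (f (z i) + ⟪f' (z i), y - z i⟫ + (1/(2*L)) * ‖g - f' (z i)‖^2)) := by
    refine ⟨f (z ⟨0, hm⟩) + ⟪f' (z ⟨0, hm⟩), y - z ⟨0, hm⟩⟫, ?_⟩
    rintro _ ⟨g, rfl⟩
    have h1 : f (z ⟨0, hm⟩) + ⟪f' (z ⟨0, hm⟩), y - z ⟨0, hm⟩⟫ ≤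
        f (z ⟨0, hm⟩) + ⟪f' (z ⟨0, hm⟩), y - z ⟨0, hm⟩⟫ + (1/(2*L)) * ‖g - f' (z ⟨0, hm⟩)‖^2 := by
      have : (0:ℝ) ≤ (1/(2*L)) * ‖g - f' (z ⟨0, hm⟩)‖^2 := by positivity
      linarith
    exact h1.trans (le_ciSup (f := fun i : Fin m =>
      f (z i) + ⟪f' (z i), y - z i⟫ + (1/(2*L)) * ‖g - f' (z i)‖^2)
      (Set.Finite.bddAbove (Set.finite_range _)) (⟨0, hm⟩ : Fin m))
  refine le_trans (ciInf_le hbdd (f' y)) ?_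
  refine ciSup_le fun i => ?_
  simpa using aux_interp hconv hgrad hL hlip (z i) y
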